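/- Let n be a positive integer, and define P₀ = 0, P₁ = 1, P_{M+2} = 2n·P_{M+1} + P_M. Then for every m ≥ 1, Q(P_{2m}; P_{2m+1}) = 0 and Q(P_{2m}; P_{2m−1}) = 0, where Q(a;b) := 6·(s(a;2b) + s(2a;b) − 2·s(a;b)) and s is the classical Dedekind sum. -/

import Mathlib

open Finset Real

/-- The classical Dedekind sum `s(a;b)` defined by the cotangent sum. -/
noncomputable def dedekindS (a : ℤ) (b : ℕ) : ℝ :=
  (1 / (4 * (b : ℝ))) * ∑ ν ∈ Finset.Ico 1 b,
    Real.cot (Real.pi * a * ν / b) * Real.cot (Real.pi * ν / b)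

/-- The rational part `Q(a;b)` of the elliptic classical Dedekind sum. -/
noncomputable def Qpart (a b : ℕ) : ℝ :=
  6 * (dedekindS a (2 * b) + dedekindS (2 * a) b - 2 * dedekindS a b)

/-! ### Cotangent lemmas (valid with Lean's junk-value conventions) -/

lemma mycot_neg (x : ℝ) : Real.cot (-x) = - Real.cot x := by
  simp [Real.cot_eq_cos_div_sin, neg_div, div_neg]

lemma mycot_pi_add (x : ℝ) : Real.cot (x + Real.pi) = Real.cot x := by
  simp [Real.cot_eq_cos_div_sin, Real.cos_add_pi, Real.sin_add_pi, neg_div_neg_eq]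

lemma mycot_int_add (x : ℝ) (t : ℤ) : Real.cot (x + t * Real.pi) = Real.cot x :=
  Function.Periodic.int_mul (mycot_pi_add : Function.Periodic Real.cot Real.pi) t x

/-- half-angle cot identity, valid with Lean's junk-value conventions. -/
lemma mycot_half (t : ℝ) : Real.cot t + Real.cot (t + Real.pi/2) = 2 * Real.cot (2*t) := by
  simp only [Real.cot_eq_cos_div_sin, Real.cos_add_pi_div_two, Real.sin_add_pi_div_two,
    Real.sin_two_mul, Real.cos_two_mul']
  rcases eq_or_ne (Real.sin t) 0 with hs | hs
  · simp [hs]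
  rcases eq_or_ne (Real.cos t) 0 with hc | hc
  · simp [hc]
  field_simp
  ring

/-! ### The periodic cotangent function and sums over `ZMod b` -/

noncomputable def fb (b : ℕ) (k : ℤ) : ℝ := Real.cot (Real.pi * k / b)

lemma fb_zero (b : ℕ) : fb b 0 = 0 := by simp [fb, Real.cot_eq_cos_div_sin]

lemma fb_neg (b : ℕ) (k : ℤ) : fb b (-k) = - fb b k := by
  rw [fb, fb, show Real.pi * (-k : ℤ) / b = -(Real.pi * k / b) by push_cast; ring, mycot_neg]

lemma fb_per (b : ℕ) (hb : b ≠ 0) (k t : ℤ) : fb b (k + b * t) = fb b k := by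
  have hb' : (b : ℝ) ≠ 0 := Nat.cast_ne_zero.mpr hb
  rw [fb, fb, show Real.pi * ((k + b*t : ℤ)) / b = Real.pi * k / b + t * Real.pi by
    push_cast; field_simp, mycot_int_add]

noncomputable def Fz (b : ℕ) [NeZero b] (x : ZMod b) : ℝ := fb b (x.val : ℤ)

lemma fb_cast (b : ℕ) [NeZero b] (k : ℤ) : fb b k = Fz b (k : ZMod b) := by
  have hb : b ≠ 0 := NeZero.ne b
  have h : ((k : ZMod b).val : ℤ) = k % b := ZMod.val_intCast k
  rw [Fz, h]
  conv_lhs => rw [show k = k % b + b * (k / b) from (Int.emod_add_mul_ediv k (b:ℤ)).symm]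
  rw [fb_per b hb]

lemma Fz_neg (b : ℕ) [NeZero b] (x : ZMod b) : Fz b (-x) = - Fz b x := by
  rw [show -x = ((-(x.val : ℤ) : ℤ) : ZMod b) by push_cast; simp [ZMod.natCast_val, ZMod.intCast_cast],
    ← fb_cast, fb_neg, Fz]

noncomputable def Tsum (b : ℕ) [NeZero b] (c d : ZMod b) : ℝ :=
  ∑ x : ZMod b, Fz b (c*x) * Fz b (d*x)

lemma Tsum_comm (b : ℕ) [NeZero b] (c d : ZMod b) : Tsum b c d = Tsum b d c := by
  unfold Tsum; exact Finset.sum_congr rfl fun x _ => mul_comm _ _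

lemma Tsum_unit (b : ℕ) [NeZero b] (c d u : ZMod b) (hu : IsUnit u) :
    Tsum b (c*u) (d*u) = Tsum b c d := by
  unfold Tsum
  apply Fintype.sum_bijective (fun x : ZMod b => u * x)
  · obtain ⟨v, rfl⟩ := hu
    exact (Units.mulLeft v).bijective
  · intro x; ring_nf

lemma Tsum_neg_left (b : ℕ) [NeZero b] (c d : ZMod b) : Tsum b (-c) d = - Tsum b c d := by
  unfold Tsum
  rw [← Finset.sum_neg_distrib]
  exact Finset.sum_congr rfl fun x _ => by rw [neg_mul, Fz_neg, neg_mul]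

lemma Tsum_key1 (b : ℕ) [NeZero b] (A : ZMod b) (hA : A^2 = -1) : Tsum b A 1 = 0 := by
  have hAu : IsUnit A := IsUnit.of_mul_eq_one (-A) (by rw [mul_neg, ← sq, hA, neg_neg])
  have h1 : Tsum b (A*A) (1*A) = Tsum b A 1 := Tsum_unit b A 1 A hAu
  rw [← sq, hA, one_mul] at h1
  rw [Tsum_neg_left, Tsum_comm b 1 A] at h1
  linarith

lemma Tsum_key2 (b : ℕ) [NeZero b] (A A' : ZMod b) (hA : A^2 = -1) (hA' : 2 * A' = A) :
    Tsum b (2*A) 1 = - Tsum b A' 1 := by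
  have hA'u : IsUnit A' := IsUnit.of_mul_eq_one (-(2*A)) (by
    have : A' * (2 * A) = A * A := by rw [← hA']; ring
    rw [mul_neg, this, ← sq, hA, neg_neg])
  have h1 : Tsum b (2*A*A') (1*A') = Tsum b (2*A) 1 := Tsum_unit b (2*A) 1 A' hA'u
  have h2 : 2*A*A' = -1 := by rw [show 2*A*A' = A*(2*A') by ring, hA', ← sq, hA]
  rw [h2, one_mul, Tsum_neg_left, Tsum_comm b 1 A'] at h1
  linarith

lemma sum_range_zmod (b : ℕ) [NeZero b] (H : ZMod b → ℝ) :
    ∑ ν ∈ Finset.range b, H ((ν : ℕ) : ZMod b) = ∑ x : ZMod b, H x := by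
  apply Finset.sum_nbij' (fun ν => ((ν : ℕ) : ZMod b)) (fun x => x.val)
  · intro ν _; exact Finset.mem_univ _
  · intro x _; exact Finset.mem_range.mpr (ZMod.val_lt x)
  · intro ν hν; exact ZMod.val_cast_of_lt (Finset.mem_range.mp hν)
  · intro x _; exact ZMod.natCast_rightInverse x
  · intro ν _; rfl

lemma Ssum_eq (b : ℕ) [NeZero b] (c d : ℤ) :
    ∑ ν ∈ Finset.range b, fb b (c*ν) * fb b (d*ν) = Tsum b (c : ZMod b) (d : ZMod b) := by
  rw [Tsum, ← sum_range_zmod b (fun x => Fz b ((c : ZMod b)*x) * Fz b ((d : ZMod b)*x))]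
  refine Finset.sum_congr rfl fun ν _ => ?_
  rw [show ((c : ZMod b) * (ν : ZMod b)) = ((c * ν : ℤ) : ZMod b) by push_cast; ring,
    show ((d : ZMod b) * (ν : ZMod b)) = ((d * ν : ℤ) : ZMod b) by push_cast; ring,
    ← fb_cast, ← fb_cast]

/-! ### Doubling / halving -/

lemma fb_double (b : ℕ) (hb : b ≠ 0) (k : ℤ) : fb (2*b) (2*k) = fb b k := by
  have hb' : (b:ℝ) ≠ 0 := Nat.cast_ne_zero.mpr hb
  rw [fb, fb]
  congr 1
  push_cast
  field_simp

lemma fb_half (b : ℕ) (hb : b ≠ 0) (k : ℤ) :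
    fb (2*b) k + fb (2*b) (k + b) = 2 * fb b k := by
  have hb' : (b:ℝ) ≠ 0 := Nat.cast_ne_zero.mpr hb
  rw [fb, fb, fb,
    show Real.pi * ((k + b : ℤ)) / ((2*b : ℕ)) = Real.pi * k / ((2*b : ℕ):ℝ) + Real.pi/2 by
      push_cast; field_simp,
    show Real.pi * k / (b:ℝ) = 2 * (Real.pi * k / ((2*b : ℕ):ℝ)) by push_cast; field_simp]
  exact mycot_half _

lemma sum_half (a' b : ℕ) (hb : b ≠ 0) :
    ∑ ν ∈ Finset.range (2*b), fb (2*b) ((2*(a':ℤ))*ν) * fb (2*b) ((1:ℤ)*ν)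
      = 2 * ∑ μ ∈ Finset.range b, fb b ((a':ℤ)*μ) * fb b ((1:ℤ)*μ) := by
  have hsplit : ∑ ν ∈ Finset.range (2*b), fb (2*b) ((2*(a':ℤ))*ν) * fb (2*b) ((1:ℤ)*ν)
      = (∑ ν ∈ Finset.range b, fb (2*b) ((2*(a':ℤ))*ν) * fb (2*b) ((1:ℤ)*ν))
        + ∑ μ ∈ Finset.range b, fb (2*b) ((2*(a':ℤ))*((b + μ : ℕ):ℤ)) * fb (2*b) ((1:ℤ)*((b + μ : ℕ):ℤ)) := by
    rw [Finset.range_eq_Ico,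
      ← Finset.sum_Ico_consecutive _ (Nat.zero_le b) (by omega : b ≤ 2*b)]
    congr 1
    · rw [Finset.range_eq_Ico]
    rw [Finset.sum_Ico_eq_sum_range, show 2*b - b = b by omega]
  rw [hsplit, ← Finset.sum_add_distrib, Finset.mul_sum]
  refine Finset.sum_congr rfl fun μ _ => ?_
  have e1 : fb (2*b) ((2*(a':ℤ))*((b + μ : ℕ):ℤ)) = fb (2*b) ((2*(a':ℤ))*μ) := by
    rw [show (2*(a':ℤ))*((b + μ : ℕ):ℤ) = (2*(a':ℤ))*μ + ((2*b : ℕ):ℤ) * a' by push_cast; ring]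
    exact fb_per (2*b) (by omega) _ _
  have e2 : fb (2*b) ((1:ℤ)*((b + μ : ℕ):ℤ)) = fb (2*b) ((1:ℤ)*(μ:ℤ) + (b:ℤ)) := by
    congr 1; push_cast; ring
  have e3 : fb (2*b) ((2*(a':ℤ))*μ) = fb b ((a':ℤ)*μ) := by
    rw [show (2*(a':ℤ))*μ = 2*((a':ℤ)*μ) by ring]; exact fb_double b hb _
  rw [e1, e2, e3]
  have hh := fb_half b hb ((1:ℤ)*(μ:ℤ))
  calc fb b ((a':ℤ)*μ) * fb (2*b) ((1:ℤ)*μ) + fb b ((a':ℤ)*μ) * fb (2*b) ((1:ℤ)*μ + (b:ℤ))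
      = fb b ((a':ℤ)*μ) * (fb (2*b) ((1:ℤ)*μ) + fb (2*b) ((1:ℤ)*μ + (b:ℤ))) := by ring
    _ = fb b ((a':ℤ)*μ) * (2 * fb b ((1:ℤ)*μ)) := by rw [hh]
    _ = 2 * (fb b ((a':ℤ)*μ) * fb b ((1:ℤ)*μ)) := by ring

/-! ### Dedekind sums via `Tsum` -/

lemma dedekindS_eq (a : ℤ) (b : ℕ) [NeZero b] :
    dedekindS a b = (1/(4*(b:ℝ))) * ∑ ν ∈ Finset.range b, fb b (a*ν) * fb b ((1:ℤ)*ν) := by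
  have hb : 0 < b := Nat.pos_of_ne_zero (NeZero.ne b)
  rw [dedekindS, Finset.range_eq_Ico, Finset.sum_eq_sum_Ico_succ_bot hb]
  rw [show fb b (a*(0:ℕ)) * fb b ((1:ℤ)*(0:ℕ)) = 0 by norm_num [fb_zero]]
  rw [zero_add]
  congr 1
  refine Finset.sum_congr rfl fun ν _ => ?_
  rw [fb, fb]
  congr 2 <;> push_cast <;> ring

lemma dedekindS_eq' (a : ℤ) (b : ℕ) [NeZero b] :
    dedekindS a b = (1/(4*(b:ℝ))) * Tsum b ((a : ZMod b)) 1 := by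
  rw [dedekindS_eq, Ssum_eq b a 1]; norm_num

/-! ### The main analytic lemma -/

lemma Qpart_zero (a b a' : ℕ) (hb : Odd b) (ha : a = 2*a')
    (hA : ((a : ZMod b))^2 = -1) : Qpart a b = 0 := by
  haveI : NeZero b := ⟨hb.pos.ne'⟩
  haveI : NeZero (2*b) := ⟨by have := hb.pos; omega⟩
  have hbne : b ≠ 0 := NeZero.ne b
  have hbR : (b:ℝ) ≠ 0 := Nat.cast_ne_zero.mpr hbne
  set A : ZMod b := (a : ZMod b) with hAdef
  have h2A' : 2 * ((a' : ℕ) : ZMod b) = A := by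
    rw [hAdef, ha]; push_cast; ring
  -- s(a;b) = 0
  have s1 : dedekindS (a:ℤ) b = 0 := by
    rw [dedekindS_eq' (a:ℤ) b]
    rw [show (((a:ℤ) : ZMod b)) = A by push_cast; rfl]
    rw [Tsum_key1 b A hA]; ring
  -- s(2a;b)
  have s2 : dedekindS ((2*a : ℕ):ℤ) b = (1/(4*(b:ℝ))) * Tsum b (2*A) 1 := by
    rw [dedekindS_eq' _ b]
    congr 2
    push_cast; ring
  -- s(a;2b)
  have s3 : dedekindS (a:ℤ) (2*b) = (1/(4*(b:ℝ))) * Tsum b ((a' : ℕ) : ZMod b) 1 := by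
    rw [dedekindS_eq (a:ℤ) (2*b),
      show ((a:ℤ)) = 2*(a':ℤ) by rw [ha]; push_cast; ring,
      sum_half a' b hbne, Ssum_eq b (a':ℤ) 1]
    push_cast
    field_simp
  have hkey2 : Tsum b (2*A) 1 = - Tsum b ((a' : ℕ) : ZMod b) 1 := Tsum_key2 b A _ hA h2A'
  rw [Qpart]
  push_cast at s1 s2 s3 ⊢
  rw [s1, s2, s3, hkey2]
  ring

/-! ### Pell-type recurrences -/

lemma pell_parity (n : ℕ) (P : ℕ → ℕ) (h0 : P 0 = 0) (h1 : P 1 = 1)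
    (hrec : ∀ M, P (M + 2) = 2 * n * P (M + 1) + P M) : ∀ M, P M % 2 = M % 2 := by
  intro M
  induction M using Nat.strong_induction_on with
  | _ M ih =>
    match M with
    | 0 => simp [h0]
    | 1 => simp [h1]
    | (M+2) =>
      have h := ih M (by omega)
      rw [hrec, show 2*n*P (M+1) = 2*(n*P (M+1)) by ring]
      omega

lemma pell_cassini (n : ℕ) (P : ℕ → ℕ) (h0 : P 0 = 0) (h1 : P 1 = 1)
    (hrec : ∀ M, P (M + 2) = 2 * n * P (M + 1) + P M) :
    ∀ j, P (2*j+2) * P (2*j) + 1 = P (2*j+1)^2 ∧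
      P (2*j+3) * P (2*j+1) = P (2*j+2)^2 + 1 := by
  intro j
  induction j with
  | zero =>
    have e2 : P 2 = 2*n*P 1 + P 0 := hrec 0
    have e3 : P 3 = 2*n*P 2 + P 1 := hrec 1
    rw [h0] at e2
    rw [h1] at e2 e3
    constructor
    · simp [h0, h1]
    · simp only [show 2*0+3 = 3 by rfl, show 2*0+2 = 2 by rfl, show 2*0+1 = 1 by rfl,
        e2, e3, h1]
      ring
  | succ j ih =>
    obtain ⟨ihA, ihB⟩ := ih
    have e1 : P (2*j+4) = 2*n*P (2*j+3) + P (2*j+2) := hrec (2*j+2)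
    have e2 : P (2*j+5) = 2*n*P (2*j+4) + P (2*j+3) := hrec (2*j+3)
    have e0 : P (2*j+3) = 2*n*P (2*j+2) + P (2*j+1) := hrec (2*j+1)
    have hfirst : P (2*j+4) * P (2*j+2) + 1 = P (2*j+3)^2 := by
      rw [e1]
      zify at ihB e0 ⊢
      linear_combination (-1 : ℤ)*ihB - (P (2*j+3) : ℤ)*e0
    have hsecond : P (2*j+5) * P (2*j+3) = P (2*j+4)^2 + 1 := by
      rw [e2]
      zify at hfirst e1 ⊢
      linear_combination (-1 : ℤ)*hfirst - (P (2*j+4) : ℤ)*e1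
    constructor
    · rw [show 2*(j+1)+2 = 2*j+4 by ring, show 2*(j+1)+1 = 2*j+3 by ring,
        show 2*(j+1) = 2*j+2 by ring]
      exact hfirst
    · rw [show 2*(j+1)+3 = 2*j+5 by ring, show 2*(j+1)+2 = 2*j+4 by ring,
        show 2*(j+1)+1 = 2*j+3 by ring]
      exact hsecond

lemma sq_cast_neg_one (a b c : ℕ) (h : b * c = a^2 + 1) : ((a : ZMod b))^2 = -1 := by
  have : ((a:ZMod b))^2 + 1 = ((b : ZMod b)) * (c : ZMod b) := by
    rw [← Nat.cast_mul, h]; push_cast; ring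
  rw [ZMod.natCast_self, zero_mul] at this
  linear_combination this

theorem Qpart_gen_pell_zero (n : ℕ) (hn : 0 < n) (P : ℕ → ℕ) (h0 : P 0 = 0) (h1 : P 1 = 1)
    (hrec : ∀ M, P (M + 2) = 2 * n * P (M + 1) + P M) :
    ∀ m, 1 ≤ m → Qpart (P (2 * m)) (P (2 * m + 1)) = 0 ∧
      Qpart (P (2 * m)) (P (2 * m - 1)) = 0 := by
  intro m hm
  obtain ⟨j, rfl⟩ : ∃ j, m = j + 1 := ⟨m - 1, by omega⟩
  have hpar := pell_parity n P h0 h1 hrec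
  obtain ⟨-, hcas⟩ := pell_cassini n P h0 h1 hrec j
  have hi1 : 2 * (j+1) = 2*j+2 := by ring
  have hi2 : 2 * (j+1) + 1 = 2*j+3 := by ring
  have hi3 : 2 * (j+1) - 1 = 2*j+1 := by omega
  rw [hi2, hi3, hi1]
  set a := P (2*j+2) with hadef
  have haeven : a % 2 = 0 := by have := hpar (2*j+2); omega
  have ha : a = 2 * (a / 2) := by omega
  have hodd1 : Odd (P (2*j+3)) := by have := hpar (2*j+3); exact Nat.odd_iff.mpr (by omega)
  have hodd2 : Odd (P (2*j+1)) := by have := hpar (2*j+1); exact Nat.odd_iff.mpr (by omega)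
  constructor
  · exact Qpart_zero a (P (2*j+3)) (a/2) hodd1 ha
      (sq_cast_neg_one a (P (2*j+3)) (P (2*j+1)) hcas)
  · exact Qpart_zero a (P (2*j+1)) (a/2) hodd2 ha
      (sq_cast_neg_one a (P (2*j+1)) (P (2*j+3)) (by rw [mul_comm]; exact hcas))
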